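/- arXiv:1012.1496 — 9 statements merged into one kernel-verified Lean document; each statement's English description precedes it below -/
import Mathlib

section
/- Let W be a k-dimensional subspace of an N-dimensional Hilbert space H with orthonormal basis {e_i}. Then there exists a subset K ⊆ {1,...,N} with |K| = k and an idempotent operator P with range W such that ⟨P*P e_i, e_j⟩ = 0 whenever (i,j) ∉ K × K. -/
open Submodule Set

theorem stmt_2 (N k : ℕ) (W : Submodule ℂ (EuclideanSpace ℂ (Fin N)))
    (hW : Module.finrank ℂ W = k) :
    ∃ K : Finset (Fin N), K.card = k ∧
      ∃ P : EuclideanSpace ℂ (Fin N) →ₗ[ℂ] EuclideanSpace ℂ (Fin N),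
        P ∘ₗ P = P ∧ LinearMap.range P = W ∧
        ∀ i j : Fin N, ¬(i ∈ K ∧ j ∈ K) →
          (inner ℂ ((LinearMap.adjoint P ∘ₗ P) (EuclideanSpace.single i (1 : ℂ)))
            (EuclideanSpace.single j (1 : ℂ)) : ℂ) = 0 := by
  classical
  have hNfr : Module.finrank ℂ (EuclideanSpace ℂ (Fin N)) = N := by
    simp [finrank_euclideanSpace_fin]
  have hk : k ≤ N := by
    have h := Submodule.finrank_le W
    rw [hW, hNfr] at h
    exact h
  let bW : Module.Basis (Fin k) ℂ W := Module.finBasisOfFinrankEq ℂ W hW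
  let v : Fin k → EuclideanSpace ℂ (Fin N) := fun i => (bW i : EuclideanSpace ℂ (Fin N))
  have hvli : LinearIndependent ℂ v :=
    bW.linearIndependent.map' W.subtype (Submodule.ker_subtype W)
  set s : Set (EuclideanSpace ℂ (Fin N)) := Set.range v with hs_def
  have hsli : LinearIndepOn ℂ id s :=
    (linearIndepOn_id_range_iff hvli.injective).mpr hvli
  have hspan_s : span ℂ s = W := by
    have : s = W.subtype '' (Set.range bW) := by
      rw [hs_def]; ext x; simp [v]
    rw [this, ← Submodule.map_span, bW.span_eq, Submodule.map_top, Submodule.range_subtype]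
  let e : Fin N → EuclideanSpace ℂ (Fin N) := fun i => EuclideanSpace.single i 1
  have he_eq : e = ⇑(EuclideanSpace.basisFun (Fin N) ℂ) := by
    funext i; simp [e]
  have he_inj : Function.Injective e := by
    rw [he_eq, ← (EuclideanSpace.basisFun (Fin N) ℂ).coe_toBasis]
    exact (EuclideanSpace.basisFun (Fin N) ℂ).toBasis.injective
  have ht_span : span ℂ (s ∪ Set.range e) = ⊤ := by
    rw [eq_top_iff]
    calc (⊤ : Submodule ℂ (EuclideanSpace ℂ (Fin N)))
        = span ℂ (Set.range e) := by
          rw [he_eq, ← (EuclideanSpace.basisFun (Fin N) ℂ).coe_toBasis,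
            (EuclideanSpace.basisFun (Fin N) ℂ).toBasis.span_eq]
      _ ≤ span ℂ (s ∪ Set.range e) := span_mono subset_union_right
  set b : Set (EuclideanSpace ℂ (Fin N)) :=
    hsli.extend (subset_union_left (s := s) (t := Set.range e)) with hb_def
  have hsb : s ⊆ b := hsli.subset_extend _
  have hbt : b ⊆ s ∪ Set.range e := hsli.extend_subset _
  have hbli : LinearIndependent ℂ ((↑) : b → EuclideanSpace ℂ (Fin N)) :=
    hsli.linearIndepOn_extend _
  have hspan_b : span ℂ b = ⊤ := by
    rw [hb_def, hsli.span_extend_eq_span, ht_span]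
  -- complement
  set U : Submodule ℂ (EuclideanSpace ℂ (Fin N)) := span ℂ (b \ s) with hU_def
  have hcompl : IsCompl W U := by
    constructor
    · rw [← hspan_s, hU_def]
      rw [disjoint_def]
      intro x hx hx'
      have h1 : ((↑) : b → EuclideanSpace ℂ (Fin N)) ''
          (Subtype.val ⁻¹' s) = s := by
        ext y; constructor
        · rintro ⟨z, hz, rfl⟩; exact hz
        · intro hy; exact ⟨⟨y, hsb hy⟩, hy, rfl⟩
      have h2 : ((↑) : b → EuclideanSpace ℂ (Fin N)) ''
          (Subtype.val ⁻¹' (b \ s)) = b \ s := by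
        ext y; constructor
        · rintro ⟨z, hz, rfl⟩; exact hz
        · intro hy; exact ⟨⟨y, hy.1⟩, hy, rfl⟩
      have hdisj : Disjoint (Subtype.val ⁻¹' s : Set b) (Subtype.val ⁻¹' (b \ s)) := by
        rw [Set.disjoint_left]
        rintro ⟨z, hz⟩ h1 h2
        exact h2.2 h1
      have := hbli.disjoint_span_image hdisj
      rw [h1, h2] at this
      exact (Submodule.disjoint_def.1 this) x hx hx'
    · rw [codisjoint_iff, ← hspan_s, hU_def, ← span_union, Set.union_diff_cancel hsb,
        hspan_b]
  -- cardinalities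
  have hbfin : b.Finite := hbli.setFinite
  have hsfin : s.Finite := Set.finite_range v
  haveI : Fintype b := hbfin.fintype
  haveI : Fintype s := hsfin.fintype
  have hscard : s.toFinset.card = k := by
    have := finrank_span_set_eq_card hsli
    rw [hspan_s, hW] at this
    exact this.symm
  have hbcard : b.toFinset.card = N := by
    have := finrank_span_set_eq_card hbli
    rw [hspan_b, finrank_top, hNfr] at this
    exact this.symm
  have hsub : s.toFinset ⊆ b.toFinset := by
    intro x hx
    rw [Set.mem_toFinset] at *
    exact hsb hx
  set A : Finset (Fin N) := Finset.univ.filter (fun i => e i ∈ b \ s) with hA_def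
  have himg : A.image e = (b \ s).toFinset := by
    ext x
    simp only [Finset.mem_image, hA_def, Finset.mem_filter, Finset.mem_univ, true_and,
      Set.mem_toFinset]
    constructor
    · rintro ⟨i, hi, rfl⟩; exact hi
    · intro hx
      rcases hbt hx.1 with h | ⟨i, rfl⟩
      · exact absurd h hx.2
      · exact ⟨i, hx, rfl⟩
  have hAcard : A.card = N - k := by
    have h1 : (A.image e).card = A.card := Finset.card_image_of_injective _ he_inj
    rw [himg] at h1
    have h2 : (b \ s).toFinset = b.toFinset \ s.toFinset := by
      ext x; simp [Set.mem_toFinset]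
    rw [h2, Finset.card_sdiff_of_subset hsub, hscard, hbcard] at h1
    omega
  refine ⟨Aᶜ, ?_, ?_⟩
  · rw [Finset.card_compl, hAcard, Fintype.card_fin]; omega
  -- the projection
  set P : EuclideanSpace ℂ (Fin N) →ₗ[ℂ] EuclideanSpace ℂ (Fin N) :=
    W.subtype ∘ₗ Submodule.projectionOnto W U hcompl with hP_def
  have hPw : ∀ w ∈ W, P w = w := by
    intro w hw
    have := Submodule.projectionOnto_apply_left hcompl ⟨w, hw⟩
    simp only [hP_def, LinearMap.comp_apply, Submodule.coe_subtype]
    rw [show w = ((⟨w, hw⟩ : W) : EuclideanSpace ℂ (Fin N)) from rfl, this]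
  have hPmem : ∀ x, P x ∈ W := fun x => (Submodule.projectionOnto W U hcompl x).2
  have hPzero : ∀ i ∈ A, P (e i) = 0 := by
    intro i hi
    rw [hA_def, Finset.mem_filter] at hi
    have : e i ∈ U := subset_span hi.2
    simp [hP_def, Submodule.projectionOnto_apply_of_mem_right hcompl this]
  refine ⟨P, ?_, ?_, ?_⟩
  · refine LinearMap.ext fun x => ?_
    exact hPw (P x) (hPmem x)
  · apply le_antisymm
    · rintro x ⟨y, rfl⟩
      exact hPmem y
    · intro w hw
      exact ⟨w, hPw w hw⟩
  · intro i j hij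
    rw [LinearMap.comp_apply, LinearMap.adjoint_inner_left]
    rcases not_and_or.1 hij with h | h
    · rw [Finset.mem_compl, not_not] at h
      rw [show EuclideanSpace.single i (1:ℂ) = e i from rfl, hPzero i h, inner_zero_left]
    · rw [Finset.mem_compl, not_not] at h
      rw [show EuclideanSpace.single j (1:ℂ) = e j from rfl, hPzero j h, inner_zero_right]
end

section
/- For every subspace W of an N-dimensional Hilbert space H with orthonormal basis {e_i}_{i=1}^N, there exists an idempotent P with range W whose matrix with respect to {e_i} is (lower) triangular. -/
namespace Stmt4Aux

variable {H : Type*} [NormedAddCommGroup H] [InnerProductSpace ℂ H]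
variable {N : ℕ} (b : OrthonormalBasis (Fin N) ℂ H)

noncomputable def U (n : ℕ) : Submodule ℂ H :=
  Submodule.span ℂ (b '' {j : Fin N | (j : ℕ) < n})

lemma mem_U_iff {n : ℕ} {x : H} :
    x ∈ U b n ↔ ∀ j : Fin N, n ≤ (j : ℕ) → b.repr x j = 0 := by
  constructor
  · intro hx
    induction hx using Submodule.span_induction with
    | mem y hy =>
      obtain ⟨k, hk, rfl⟩ := hy
      simp only [Set.mem_setOf_eq] at hk
      intro j hj
      have hne : j ≠ k := by
        intro h; rw [h] at hj; omega
      simp [b.repr_self, EuclideanSpace.single_apply, hne]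
    | zero => simp
    | add y z _ _ hy hz => intro j hj; simp [hy j hj, hz j hj]
    | smul c y _ hy => intro j hj; simp [hy j hj]
  · intro hx
    have := b.sum_repr x
    rw [← this]
    apply Submodule.sum_mem
    intro j _
    by_cases hj : (j : ℕ) < n
    · exact Submodule.smul_mem _ _ (Submodule.subset_span ⟨j, hj, rfl⟩)
    · rw [hx j (by omega)]
      simp

lemma U_mono {m n : ℕ} (h : m ≤ n) : U b m ≤ U b n := by
  intro x hx
  rw [mem_U_iff] at hx ⊢
  intro j hj
  exact hx j (le_trans h hj)

lemma repr_sub_sum (v : H) (g : Fin N → H) (c : Fin N → ℂ) (k : Fin N) :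
    b.repr (v - ∑ j, c j • g j) k = b.repr v k - ∑ j, c j * b.repr (g j) k := by
  simp [Finset.sum_apply]

variable (W : Submodule ℂ H)

/-- `i` is a pivot column for `W`. -/
def Piv (i : Fin N) : Prop := W ⊓ U b ((i : ℕ) + 1) ≠ W ⊓ U b (i : ℕ)

lemma not_piv {i : Fin N} (h : ¬ Piv b W i) :
    W ⊓ U b ((i : ℕ) + 1) = W ⊓ U b (i : ℕ) := not_not.mp h

lemma piv_exists {i : Fin N} (h : Piv b W i) :
    ∃ w ∈ W ⊓ U b ((i : ℕ) + 1), b.repr w i ≠ 0 := by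
  have hle : W ⊓ U b (i : ℕ) ≤ W ⊓ U b ((i : ℕ) + 1) :=
    inf_le_inf_left _ (U_mono b (by omega))
  have hnle : ¬ W ⊓ U b ((i : ℕ) + 1) ≤ W ⊓ U b (i : ℕ) := by
    intro hle2
    exact h (le_antisymm hle2 hle)
  obtain ⟨w, hw, hw2⟩ := SetLike.not_le_iff_exists.mp hnle
  refine ⟨w, hw, ?_⟩
  intro hzero
  apply hw2
  refine ⟨hw.1, ?_⟩
  show w ∈ U b (i : ℕ)
  rw [mem_U_iff]
  intro j hj
  rcases eq_or_lt_of_le hj with hj' | hj'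
  · have : j = i := Fin.ext hj'.symm
    rw [this]; exact hzero
  · exact (mem_U_iff b).mp hw.2 j (by omega)

/-- Existence of a reduced echelon vector at each pivot. -/
lemma exists_reduced : ∀ n : ℕ, ∀ i : Fin N, (i : ℕ) = n → Piv b W i →
    ∃ w, w ∈ W ⊓ U b ((i : ℕ) + 1) ∧ b.repr w i = 1 ∧
      ∀ j : Fin N, j < i → Piv b W j → b.repr w j = 0 := by
  intro n
  induction n using Nat.strong_induction_on with
  | _ n ih =>
    rintro i rfl hpiv
    classical
    obtain ⟨w', hw', hne⟩ := piv_exists b W hpiv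
    set v : H := (b.repr w' i)⁻¹ • w' with hv
    have hvW : v ∈ W := Submodule.smul_mem _ _ hw'.1
    have hvU : v ∈ U b ((i : ℕ) + 1) := Submodule.smul_mem _ _ hw'.2
    have hvi : b.repr v i = 1 := by
      simp [hv, inv_mul_cancel₀ hne]
    -- chosen reduced vectors for earlier pivots
    let g : Fin N → H := fun j =>
      if h : j < i ∧ Piv b W j then
        Classical.choose (ih (j : ℕ) h.1 j rfl h.2)
      else 0
    have hg0 : ∀ j : Fin N, ¬ (j < i ∧ Piv b W j) → g j = 0 := by
      intro j h; simp only [g]; rw [dif_neg h]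
    have hgW : ∀ j, g j ∈ W := by
      intro j
      by_cases h : j < i ∧ Piv b W j
      · simp only [g]; rw [dif_pos h]
        exact (Classical.choose_spec (ih (j : ℕ) h.1 j rfl h.2)).1.1
      · rw [hg0 j h]; exact Submodule.zero_mem _
    have hgU : ∀ j : Fin N, j < i → g j ∈ U b ((j : ℕ) + 1) := by
      intro j hj
      by_cases h : j < i ∧ Piv b W j
      · simp only [g]; rw [dif_pos h]
        exact (Classical.choose_spec (ih (j : ℕ) h.1 j rfl h.2)).1.2
      · rw [hg0 j h]; exact Submodule.zero_mem _
    have hgself : ∀ j : Fin N, (h : j < i ∧ Piv b W j) → b.repr (g j) j = 1 := by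
      intro j h
      simp only [g]; rw [dif_pos h]
      exact (Classical.choose_spec (ih (j : ℕ) h.1 j rfl h.2)).2.1
    have hgred : ∀ j : Fin N, (h : j < i ∧ Piv b W j) → ∀ k : Fin N, k < j → Piv b W k →
        b.repr (g j) k = 0 := by
      intro j h k hk hpk
      simp only [g]; rw [dif_pos h]
      exact (Classical.choose_spec (ih (j : ℕ) h.1 j rfl h.2)).2.2 k hk hpk
    refine ⟨v - ∑ j : Fin N, b.repr v j • g j, ⟨⟨?_, ?_⟩, ?_, ?_⟩⟩
    · exact Submodule.sub_mem _ hvW (Submodule.sum_mem _ fun j _ => Submodule.smul_mem _ _ (hgW j))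
    · refine Submodule.sub_mem _ hvU (Submodule.sum_mem _ fun j _ => Submodule.smul_mem _ _ ?_)
      by_cases hj : j < i
      · exact U_mono b (by have : (j : ℕ) < (i : ℕ) := hj; omega) (hgU j hj)
      · rw [hg0 j (fun h => hj h.1)]; exact Submodule.zero_mem _
    · rw [repr_sub_sum, hvi]
      have hz : ∀ j ∈ Finset.univ, b.repr v j * b.repr (g j) i = 0 := by
        intro j _
        by_cases hj : j < i
        · have := (mem_U_iff b).mp (hgU j hj) i
            (by have : (j : ℕ) < (i : ℕ) := hj; omega)
          rw [this, mul_zero]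
        · rw [hg0 j (fun h => hj h.1)]; simp
      rw [Finset.sum_congr rfl hz]
      simp
    · intro k hk hpk
      rw [repr_sub_sum]
      have hsum : ∑ j : Fin N, b.repr v j * b.repr (g j) k = b.repr v k := by
        rw [Finset.sum_eq_single k]
        · rw [hgself k ⟨hk, hpk⟩, mul_one]
        · intro j _ hjk
          by_cases hj : j < i ∧ Piv b W j
          · rcases lt_or_gt_of_ne hjk with h1 | h1
            · -- j < k : g j ∈ U (j+1), k > j
              have := (mem_U_iff b).mp (hgU j hj.1) k
                (by have : (j : ℕ) < (k : ℕ) := h1; omega)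
              rw [this, mul_zero]
            · -- k < j : reducedness
              rw [hgred j hj k h1 hpk, mul_zero]
          · rw [hg0 j hj]; simp
        · simp
      rw [hsum]
      ring

end Stmt4Aux

open Stmt4Aux

theorem stmt_4 {H : Type*} [NormedAddCommGroup H] [InnerProductSpace ℂ H]
    (N : ℕ) (b : OrthonormalBasis (Fin N) ℂ H) (W : Submodule ℂ H) :
    ∃ P : H →ₗ[ℂ] H, P ∘ₗ P = P ∧ LinearMap.range P = W ∧
      ∀ i j : Fin N, i < j → (inner ℂ (P (b i)) (b j) : ℂ) = 0 := by
  classical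
  let f : Fin N → H := fun i =>
    if h : Piv b W i then Classical.choose (exists_reduced b W (i : ℕ) i rfl h) else 0
  have hf0 : ∀ i, ¬ Piv b W i → f i = 0 := by
    intro i h; simp only [f]; rw [dif_neg h]
  have hfW : ∀ i, f i ∈ W := by
    intro i
    by_cases h : Piv b W i
    · simp only [f]; rw [dif_pos h]
      exact (Classical.choose_spec (exists_reduced b W (i : ℕ) i rfl h)).1.1
    · rw [hf0 i h]; exact Submodule.zero_mem _
  have hfU : ∀ i : Fin N, f i ∈ U b ((i : ℕ) + 1) := by
    intro i
    by_cases h : Piv b W i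
    · simp only [f]; rw [dif_pos h]
      exact (Classical.choose_spec (exists_reduced b W (i : ℕ) i rfl h)).1.2
    · rw [hf0 i h]; exact Submodule.zero_mem _
  have hf1 : ∀ i, Piv b W i → b.repr (f i) i = 1 := by
    intro i h
    simp only [f]; rw [dif_pos h]
    exact (Classical.choose_spec (exists_reduced b W (i : ℕ) i rfl h)).2.1
  have hfred : ∀ i, Piv b W i → ∀ j : Fin N, j < i → Piv b W j → b.repr (f i) j = 0 := by
    intro i h j hj hpj
    simp only [f]; rw [dif_pos h]
    exact (Classical.choose_spec (exists_reduced b W (i : ℕ) i rfl h)).2.2 j hj hpj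
  set P : H →ₗ[ℂ] H := b.toBasis.constr ℂ f with hP
  have hPb : ∀ i, P (b i) = f i := by
    intro i
    have := b.toBasis.constr_basis ℂ f i
    rwa [b.coe_toBasis] at this
  have hPapply : ∀ x : H, P x = ∑ i, b.repr x i • f i := by
    intro x
    rw [hP, Module.Basis.constr_apply_fintype]
    refine Finset.sum_congr rfl fun i _ => ?_
    rw [Module.Basis.equivFun_apply, b.coe_toBasis_repr_apply]
  have hPf : ∀ i, P (f i) = f i := by
    intro i
    by_cases h : Piv b W i
    · rw [hPapply]
      rw [Finset.sum_eq_single i]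
      · rw [hf1 i h, one_smul]
      · intro j _ hji
        rcases lt_or_gt_of_ne hji with h1 | h1
        · -- j < i
          by_cases hpj : Piv b W j
          · rw [hfred i h j h1 hpj, zero_smul]
          · rw [hf0 j hpj, smul_zero]
        · -- j > i : repr (f i) j = 0 since f i ∈ U (i+1)
          have := (mem_U_iff b).mp (hfU i) j
            (by have : (i : ℕ) < (j : ℕ) := h1; omega)
          rw [this, zero_smul]
      · simp
    · rw [hf0 i h, map_zero]
  refine ⟨P, ?_, ?_, ?_⟩
  · -- idempotent
    apply b.toBasis.ext
    intro i
    rw [b.coe_toBasis, LinearMap.comp_apply, hPb i, hPf i]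
  · -- range
    apply le_antisymm
    · rintro x ⟨y, rfl⟩
      rw [hPapply]
      exact Submodule.sum_mem _ fun i _ => Submodule.smul_mem _ _ (hfW i)
    · have key : ∀ n : ℕ, W ⊓ U b n ≤ LinearMap.range P := by
        intro n
        induction n with
        | zero =>
          rintro x ⟨-, hxU⟩
          have hx0 : x = 0 := by
            have hrepr : b.repr x = 0 := by
              ext j
              exact (mem_U_iff b).mp hxU j (by omega)
            have := congrArg (fun y => b.repr.symm y) hrepr
            simpa using this
          rw [hx0]
          exact Submodule.zero_mem _
        | succ n ih =>
          rintro x ⟨hxW, hxU⟩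
          by_cases hn : n < N
          · set i : Fin N := ⟨n, hn⟩ with hi
            by_cases hp : Piv b W i
            · set c : ℂ := b.repr x i with hc
              have hyW : x - c • f i ∈ W :=
                Submodule.sub_mem _ hxW (Submodule.smul_mem _ _ (hfW i))
              have hyU : x - c • f i ∈ U b n := by
                rw [mem_U_iff]
                intro j hj
                rw [map_sub, map_smul, PiLp.sub_apply, PiLp.smul_apply]
                rcases eq_or_lt_of_le hj with hj' | hj'
                · have hji : j = i := Fin.ext (by simp [hi, ← hj'])
                  rw [hji, hf1 i hp, ← hc]
                  simp
                · have h1 : b.repr x j = 0 := (mem_U_iff b).mp hxU j (by omega)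
                  have h2 : b.repr (f i) j = 0 :=
                    (mem_U_iff b).mp (hfU i) j (by simp [hi]; omega)
                  rw [h1, h2]
                  simp
              have h1 : x - c • f i ∈ LinearMap.range P := ih ⟨hyW, hyU⟩
              have h2 : c • f i ∈ LinearMap.range P := by
                refine Submodule.smul_mem _ _ ⟨b i, hPb i⟩
              have := Submodule.add_mem _ h1 h2
              simpa using this
            · have heq := not_piv b W hp
              have : (i : ℕ) = n := rfl
              rw [this] at heq
              exact ih (heq ▸ (⟨hxW, hxU⟩ : x ∈ W ⊓ U b (n + 1)))
          · refine ih ⟨hxW, ?_⟩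
            show x ∈ U b n
            rw [mem_U_iff]
            intro j hj
            exact absurd j.isLt (by omega)
      intro x hx
      refine key N ⟨hx, ?_⟩
      show x ∈ U b N
      rw [mem_U_iff]
      intro j hj
      exact absurd j.isLt (by omega)
  · -- triangular
    intro i j hij
    rw [hPb i, ← inner_conj_symm, ← b.repr_apply_apply]
    have : b.repr (f i) j = 0 :=
      (mem_U_iff b).mp (hfU i) j (by have : (i : ℕ) < (j : ℕ) := hij; omega)
    rw [this, map_zero]
end

section
/- If {x_i}_{i=1}^M is a frame for an N-dimensional Hilbert space H (i.e., the x_i span H) and W_i = span{x_i}, then there exist idempotents P_i with range P_i = W_i and positive weights v_i such that ∑_{i=1}^M v_i² P_i* P_i = Id. -/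
open Matrix ComplexOrder MatrixOrder in
lemma aux_posDef_of_posSemidef_isUnit {n : Type*} [Fintype n] [DecidableEq n]
    {R : Matrix n n ℂ} (h : R.PosSemidef) (hu : IsUnit R) : R.PosDef := by
  refine Matrix.PosDef.of_dotProduct_mulVec_pos h.1 fun y hy => ?_
  have hQ : CFC.sqrt R * CFC.sqrt R = R := CFC.sqrt_mul_sqrt_self R h.nonneg
  have hQH : (CFC.sqrt R).conjTranspose = CFC.sqrt R := (CFC.sqrt_nonneg R).posSemidef.isHermitian
  have key : star y ⬝ᵥ R *ᵥ y = star (CFC.sqrt R *ᵥ y) ⬝ᵥ (CFC.sqrt R *ᵥ y) := by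
    rw [star_mulVec, hQH, ← dotProduct_mulVec, mulVec_mulVec, hQ]
  have hz : CFC.sqrt R *ᵥ y ≠ 0 := by
    intro h0
    apply hy
    have hRy : R *ᵥ y = 0 := by rw [← hQ, ← mulVec_mulVec, h0, mulVec_zero]
    have := Matrix.mulVec_injective_iff_isUnit.mpr hu
    exact this (by simpa using hRy)
  rw [key]
  refine lt_of_le_of_ne (dotProduct_star_self_nonneg _) ?_
  exact fun h0 => hz (dotProduct_star_self_eq_zero.mp h0.symm)

open Matrix in
lemma aux_sum_mulVec {k n m : Type*} [Fintype n] (s : Finset k) (f : k → Matrix m n ℂ)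
    (y : n → ℂ) : (∑ i ∈ s, f i) *ᵥ y = ∑ i ∈ s, f i *ᵥ y := by
  induction s using Finset.cons_induction with
  | empty => simp
  | cons a s ha ih => simp [Finset.sum_cons, Matrix.add_mulVec, ih]

open Matrix in
lemma aux_dotProduct_sum {k n : Type*} [Fintype n] (s : Finset k) (v : n → ℂ)
    (w : k → (n → ℂ)) : v ⬝ᵥ (∑ i ∈ s, w i) = ∑ i ∈ s, v ⬝ᵥ w i := by
  simp only [dotProduct, Finset.sum_apply, Finset.mul_sum]
  exact Finset.sum_comm

open Matrix in
lemma aux_term (N : ℕ) (a y : Fin N → ℂ) :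
    star y ⬝ᵥ (vecMulVec a (star a)) *ᵥ y
      = (starRingEnd ℂ) (star a ⬝ᵥ y) * (star a ⬝ᵥ y) := by
  simp only [dotProduct, mulVec, vecMulVec_apply, Pi.star_apply, Complex.star_def, map_sum,
    Finset.sum_mul_sum, Finset.mul_sum, Finset.sum_mul]
  rw [Finset.sum_comm]
  refine Finset.sum_congr rfl fun j _ => Finset.sum_congr rfl fun l _ => ?_
  simp only [_root_.map_mul, Complex.conj_conj]
  ring

-- if y is orthogonal to all x i then y = 0
lemma aux_orth_zero (N M : ℕ) (x : Fin M → EuclideanSpace ℂ (Fin N))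
    (hspan : Submodule.span ℂ (Set.range x) = ⊤) (y : EuclideanSpace ℂ (Fin N))
    (hall : ∀ i, (inner ℂ (x i) y : ℂ) = 0) : y = 0 := by
  have hmem : y ∈ (Submodule.span ℂ (Set.range x))ᗮ := by
    rw [Submodule.mem_orthogonal]
    intro u hu
    induction hu using Submodule.span_induction with
    | mem u hu => obtain ⟨i, rfl⟩ := hu; exact hall i
    | zero => simp
    | add u v _ _ hu hv => rw [inner_add_left, hu, hv, add_zero]
    | smul a u _ hu => rw [inner_smul_left, hu, mul_zero]
  rw [hspan, Submodule.top_orthogonal_eq_bot, Submodule.mem_bot] at hmem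
  exact hmem

open Matrix ComplexOrder in
lemma aux_S_posDef (N M : ℕ) (x : Fin M → EuclideanSpace ℂ (Fin N))
    (hspan : Submodule.span ℂ (Set.range x) = ⊤) :
    (∑ i, vecMulVec (x i) (star (x i)) : Matrix (Fin N) (Fin N) ℂ).PosDef := by
  refine Matrix.PosDef.of_dotProduct_mulVec_pos ?_ ?_
  · show _ = _
    rw [conjTranspose_sum]
    refine Finset.sum_congr rfl fun i _ => ?_
    ext j k
    simp [vecMulVec_apply, mul_comm]
  · intro y hy
    have hsum : star y ⬝ᵥ (∑ i, vecMulVec (x i) (star (x i))) *ᵥ y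
        = ∑ i, (starRingEnd ℂ) (star (x i) ⬝ᵥ y) * (star (x i) ⬝ᵥ y) := by
      rw [aux_sum_mulVec, aux_dotProduct_sum]
      exact Finset.sum_congr rfl fun i _ => aux_term N (x i) y
    rw [hsum]
    have hex : ∃ i, star (x i) ⬝ᵥ y ≠ 0 := by
      by_contra hall
      push_neg at hall
      exact hy (by simpa using congrArg WithLp.ofLp (aux_orth_zero N M x hspan (WithLp.toLp 2 y)
        (fun i => by rw [EuclideanSpace.inner_eq_star_dotProduct, dotProduct_comm]; exact hall i)))
    obtain ⟨i0, hi0⟩ := hex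
    calc (0:ℂ) < ∑ i, ((Complex.normSq (star (x i) ⬝ᵥ y) : ℝ) : ℂ) := by
          rw [← Complex.ofReal_sum, Complex.zero_lt_real]
          refine Finset.sum_pos' (fun i _ => Complex.normSq_nonneg _) ⟨i0, Finset.mem_univ _, ?_⟩
          exact Complex.normSq_pos.mpr hi0
      _ = ∑ i, (starRingEnd ℂ) (star (x i) ⬝ᵥ y) * (star (x i) ⬝ᵥ y) := by
          refine Finset.sum_congr rfl fun i _ => ?_
          rw [← Complex.normSq_eq_conj_mul_self]

theorem stmt_6 (N M : ℕ) (x : Fin M → EuclideanSpace ℂ (Fin N))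
    (hx : ∀ i, x i ≠ 0) (hspan : Submodule.span ℂ (Set.range x) = ⊤) :
    ∃ (P : Fin M → (EuclideanSpace ℂ (Fin N) →ₗ[ℂ] EuclideanSpace ℂ (Fin N)))
      (v : Fin M → ℝ),
      (∀ i, 0 < v i) ∧
      (∀ i, P i ∘ₗ P i = P i) ∧
      (∀ i, LinearMap.range (P i) = Submodule.span ℂ {x i}) ∧
      ∑ i, ((v i : ℂ) ^ 2) • (LinearMap.adjoint (P i) ∘ₗ P i) = LinearMap.id := by
  open Matrix ComplexOrder MatrixOrder in
  classical
  set Sm : Matrix (Fin N) (Fin N) ℂ := ∑ i, vecMulVec (x i) (star (x i)) with hSm_def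
  have hSm : Sm.PosDef := aux_S_posDef N M x hspan
  set R : Matrix (Fin N) (Fin N) ℂ := CFC.sqrt Sm with hR_def
  have hRR : R * R = Sm := CFC.sqrt_mul_sqrt_self Sm hSm.posSemidef.nonneg
  have hRu : IsUnit R := by
    rw [Matrix.isUnit_iff_isUnit_det, isUnit_iff_ne_zero]
    intro h0
    have : R.det * R.det = Sm.det := by rw [← Matrix.det_mul, hRR]
    rw [h0, mul_zero] at this
    exact hSm.det_pos.ne' this.symm
  have hRpd : R.PosDef := aux_posDef_of_posSemidef_isUnit (CFC.sqrt_nonneg Sm).posSemidef hRu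
  set Tm : Matrix (Fin N) (Fin N) ℂ := R⁻¹ with hTm_def
  have hTpd : Tm.PosDef := hRpd.inv
  have hTH : Tmᴴ = Tm := hTpd.isHermitian
  have hRdet : IsUnit R.det := (Matrix.isUnit_iff_isUnit_det R).mp hRu
  have hTS : Tm * Sm * Tm = 1 := by
    rw [← hRR]
    calc Tm * (R * R) * Tm = (Tm * R) * (R * Tm) := by
          simp only [Matrix.mul_assoc]
      _ = 1 := by rw [Matrix.nonsing_inv_mul R hRdet, Matrix.mul_nonsing_inv R hRdet, one_mul]
  set c : Fin M → EuclideanSpace ℂ (Fin N) := fun i => WithLp.toLp 2 (Tm *ᵥ (x i) : Fin N → ℂ) with hc_def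
  set t : Fin M → ℂ := fun i => (inner ℂ (c i) (x i) : ℂ) with ht_def
  have htd : ∀ i, t i = star (x i) ⬝ᵥ Tm *ᵥ (x i) := by
    intro i
    rw [ht_def]
    show (x i : Fin N → ℂ) ⬝ᵥ star (c i : Fin N → ℂ) = _
    rw [dotProduct_comm, hc_def]
    show star (Tm *ᵥ (x i)) ⬝ᵥ (x i : Fin N → ℂ) = _
    rw [star_mulVec, hTH, ← dotProduct_mulVec]
  have htpos : ∀ i, 0 < t i := by
    intro i
    rw [htd i]
    exact hTpd.dotProduct_mulVec_pos (by simpa using hx i)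
  have ht0 : ∀ i, t i ≠ 0 := fun i => (htpos i).ne'
  have htre : ∀ i, ((t i).re : ℂ) = t i := by
    intro i
    have him : (t i).im = 0 := ((Complex.lt_def.mp (htpos i)).2).symm
    exact Complex.ext rfl (by simp [him])
  have htrepos : ∀ i, 0 < (t i).re := fun i => (Complex.lt_def.mp (htpos i)).1
  -- the linear maps
  set P : Fin M → (EuclideanSpace ℂ (Fin N) →ₗ[ℂ] EuclideanSpace ℂ (Fin N)) := fun i =>
    (LinearMap.toSpanSingleton ℂ (EuclideanSpace ℂ (Fin N)) (x i)).comp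
      ((t i)⁻¹ • (innerₛₗ ℂ (c i))) with hP_def
  have hPapp : ∀ i y, P i y = ((t i)⁻¹ * (inner ℂ (c i) y : ℂ)) • x i := by
    intro i y
    simp [hP_def, LinearMap.toSpanSingleton_apply, smul_smul]
  refine ⟨P, fun i => (t i).re / ‖x i‖, ?_, ?_, ?_, ?_⟩
  · intro i
    exact div_pos (htrepos i) (norm_pos_iff.mpr (hx i))
  · intro i
    apply LinearMap.ext
    intro y
    rw [LinearMap.comp_apply, hPapp, hPapp, inner_smul_right]
    have hcx : (inner ℂ (c i) (x i) : ℂ) = t i := rfl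
    rw [hcx]
    congr 1
    field_simp [ht0 i]
  · intro i
    apply le_antisymm
    · rintro z ⟨y, rfl⟩
      rw [hPapp]
      exact Submodule.smul_mem _ _ (Submodule.mem_span_singleton_self _)
    · rw [Submodule.span_singleton_le_iff_mem]
      refine ⟨x i, ?_⟩
      rw [hPapp]
      have hcx : (inner ℂ (c i) (x i) : ℂ) = t i := rfl
      rw [hcx, inv_mul_cancel₀ (ht0 i), one_smul]
  · -- the resolution of the identity
    have hadj : ∀ i, LinearMap.adjoint (P i) =
        (LinearMap.toSpanSingleton ℂ (EuclideanSpace ℂ (Fin N)) (c i)).comp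
          ((starRingEnd ℂ ((t i)⁻¹)) • (innerₛₗ ℂ (x i))) := by
      intro i
      symm
      rw [LinearMap.eq_adjoint_iff]
      intro u w
      rw [hPapp]
      simp only [LinearMap.comp_apply, LinearMap.smul_apply, innerₛₗ_apply_apply,
        LinearMap.toSpanSingleton_apply, smul_smul, inner_smul_left, inner_smul_right]
      simp only [smul_eq_mul, _root_.map_mul, Complex.conj_conj, map_inv₀, inner_conj_symm]
      ring
    -- Parseval
    have hCm : ∑ i, vecMulVec (c i : Fin N → ℂ) (star (c i : Fin N → ℂ)) = 1 := by
      calc ∑ i, vecMulVec (c i : Fin N → ℂ) (star (c i : Fin N → ℂ))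
          = ∑ i, Tm * vecMulVec (x i) (star (x i)) * Tm := by
            refine Finset.sum_congr rfl fun i _ => ?_
            rw [hc_def]
            show vecMulVec (Tm *ᵥ (x i)) (star (Tm *ᵥ (x i))) = _
            rw [star_mulVec, hTH, vecMulVec_eq Unit, vecMulVec_eq Unit,
              Matrix.replicateCol_mulVec, Matrix.replicateRow_vecMul]
            simp only [Matrix.mul_assoc]
        _ = Tm * Sm * Tm := by rw [hSm_def, Finset.mul_sum, Finset.sum_mul]
        _ = 1 := hTS
    have parseval : ∀ y : EuclideanSpace ℂ (Fin N),
        ∑ i, (inner ℂ (c i) y : ℂ) • c i = y := by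
      intro y
      have h1 : ∀ i, (inner ℂ (c i) y : ℂ) • c i
          = WithLp.toLp 2 ((vecMulVec (c i : Fin N → ℂ) (star (c i : Fin N → ℂ))) *ᵥ y : Fin N → ℂ) := by
        intro i
        ext j
        show (inner ℂ (c i) y : ℂ) * (c i j) = _
        simp only [mulVec, vecMulVec_apply, dotProduct]
        rw [show (inner ℂ (c i) y : ℂ) = ∑ k, y k * (starRingEnd ℂ) (c i k) from rfl]
        rw [Finset.sum_mul]
        refine Finset.sum_congr rfl fun k _ => ?_
        simp only [Pi.star_apply, RCLike.star_def]
        ring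
      calc ∑ i, (inner ℂ (c i) y : ℂ) • c i
          = WithLp.toLp 2 ((∑ i, vecMulVec (c i : Fin N → ℂ) (star (c i : Fin N → ℂ))) *ᵥ y : Fin N → ℂ) := by
            rw [aux_sum_mulVec, WithLp.toLp_sum]
            exact Finset.sum_congr rfl fun i _ => h1 i
        _ = y := by rw [hCm, Matrix.one_mulVec]
    apply LinearMap.ext
    intro y
    rw [LinearMap.sum_apply, LinearMap.id_apply]
    simp only [LinearMap.smul_apply]
    have hterm : ∀ i, (((((t i).re / ‖x i‖ : ℝ) : ℂ)) ^ 2) •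
        ((LinearMap.adjoint (P i) ∘ₗ P i) y) = (inner ℂ (c i) y : ℂ) • c i := by
      intro i
      rw [LinearMap.comp_apply, hadj, hPapp]
      simp only [LinearMap.comp_apply, LinearMap.smul_apply, innerₛₗ_apply_apply,
        LinearMap.toSpanSingleton_apply, inner_smul_right, smul_smul]
      congr 1
      have hxx : (inner ℂ (x i) (x i) : ℂ) = ((‖x i‖ : ℝ) : ℂ) ^ 2 := by
        rw [inner_self_eq_norm_sq_to_K]; norm_cast
      rw [hxx]
      have hnx : ((‖x i‖ : ℝ) : ℂ) ≠ 0 := by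
        simpa using (norm_pos_iff.mpr (hx i)).ne'
      have hconj : (starRingEnd ℂ) (t i) = t i := by rw [← htre i]; exact Complex.conj_ofReal _
      have htne : ((t i).re : ℂ) ≠ 0 := by
        exact_mod_cast (htrepos i).ne'
      rw [map_inv₀, hconj]
      push_cast
      rw [← htre i]
      simp only [Complex.ofReal_re]
      field_simp
      have h2 : ((t i).re : ℂ) ^ 2 * ((t i).re : ℂ)⁻¹ ^ 2 = 1 := by
        rw [← mul_pow, mul_inv_cancel₀ htne, one_pow]
      linear_combination ((‖x i‖ : ℂ) ^ 2 * inner ℂ (c i) y) * h2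
    rw [Finset.sum_congr rfl fun i _ => hterm i]
    exact parseval y
end

section
/- Let W be a k-dimensional subspace of an N-dimensional Hilbert space and P an idempotent with range W such that P*P is diagonal with respect to the standard orthonormal basis {e_i}. Then {P e_i : P e_i ≠ 0} is an orthogonal basis for W consisting of exactly k vectors, and the diagonal entries of P*P are ‖P e_i‖². -/
theorem stmt_7 (N k : ℕ) (W : Submodule ℂ (EuclideanSpace ℂ (Fin N)))
    (hWk : Module.finrank ℂ W = k)
    (P : EuclideanSpace ℂ (Fin N) →ₗ[ℂ] EuclideanSpace ℂ (Fin N))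
    (hP : P ∘ₗ P = P) (hrange : LinearMap.range P = W)
    (hdiag : ∀ i j : Fin N, i ≠ j →
      (inner ℂ ((LinearMap.adjoint P ∘ₗ P) (EuclideanSpace.single i (1 : ℂ)))
        (EuclideanSpace.single j (1 : ℂ)) : ℂ) = 0) :
    Nat.card {i : Fin N // P (EuclideanSpace.single i (1 : ℂ)) ≠ 0} = k ∧
    (∀ i j : Fin N, i ≠ j →
      (inner ℂ (P (EuclideanSpace.single i (1 : ℂ)))
        (P (EuclideanSpace.single j (1 : ℂ))) : ℂ) = 0) ∧
    Submodule.span ℂ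
      ((fun i => P (EuclideanSpace.single i (1 : ℂ))) ''
        {i : Fin N | P (EuclideanSpace.single i (1 : ℂ)) ≠ 0}) = W ∧
    (∀ i : Fin N,
      (inner ℂ ((LinearMap.adjoint P ∘ₗ P) (EuclideanSpace.single i (1 : ℂ)))
        (EuclideanSpace.single i (1 : ℂ)) : ℂ)
        = (‖P (EuclideanSpace.single i (1 : ℂ))‖ ^ 2 : ℝ)) := by
  set v : Fin N → EuclideanSpace ℂ (Fin N) :=
    fun i => P (EuclideanSpace.single i (1 : ℂ)) with hv
  have hinner : ∀ i j : Fin N,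
      (inner ℂ ((LinearMap.adjoint P ∘ₗ P) (EuclideanSpace.single i (1 : ℂ)))
        (EuclideanSpace.single j (1 : ℂ)) : ℂ) = inner ℂ (v i) (v j) := by
    intro i j
    simp [LinearMap.comp_apply, LinearMap.adjoint_inner_left, hv]
  have horth : ∀ i j : Fin N, i ≠ j → (inner ℂ (v i) (v j) : ℂ) = 0 := by
    intro i j hij
    rw [← hinner]
    exact hdiag i j hij
  -- span fact
  have hspan_all : Submodule.span ℂ (Set.range v) = W := by
    have hb : Submodule.span ℂ (Set.range fun i : Fin N =>
        EuclideanSpace.single i (1 : ℂ)) = ⊤ := by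
      have h := (EuclideanSpace.basisFun (Fin N) ℂ).toBasis.span_eq
      rw [show Set.range (EuclideanSpace.basisFun (Fin N) ℂ).toBasis
          = Set.range fun i : Fin N => EuclideanSpace.single i (1 : ℂ) by
        ext x; simp [EuclideanSpace.basisFun_apply]] at h
      exact h
    calc Submodule.span ℂ (Set.range v)
        = Submodule.span ℂ (P '' Set.range fun i : Fin N =>
            EuclideanSpace.single i (1 : ℂ)) := by
          rw [← Set.range_comp]; rfl
      _ = Submodule.map P (Submodule.span ℂ (Set.range fun i : Fin N =>
            EuclideanSpace.single i (1 : ℂ))) := (Submodule.map_span P _).symm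
      _ = Submodule.map P ⊤ := by rw [hb]
      _ = LinearMap.range P := (LinearMap.range_eq_map P).symm
      _ = W := hrange
  have hspan : Submodule.span ℂ (v '' {i : Fin N | v i ≠ 0}) = W := by
    rw [← hspan_all]
    apply le_antisymm
    · exact Submodule.span_mono (Set.image_subset_range _ _)
    · rw [Submodule.span_le]
      rintro x ⟨i, rfl⟩
      by_cases h : v i = 0
      · rw [h]; exact (Submodule.span ℂ _).zero_mem
      · exact Submodule.subset_span ⟨i, h, rfl⟩
  -- cardinality
  have hmem : ∀ i : Fin N, v i ∈ W := by
    intro i; rw [← hrange]; exact ⟨_, rfl⟩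
  have hcard : Nat.card {i : Fin N // v i ≠ 0} = k := by
    set S : Set (Fin N) := {i : Fin N | v i ≠ 0} with hS
    let w : S → W := fun i => ⟨v i, hmem i⟩
    have hzne : ∀ i : S, w i ≠ 0 := by
      intro i hcontra
      exact i.2 (by simpa [w] using congrArg Subtype.val hcontra)
    have hliE : LinearIndependent ℂ (fun i : S => v i) := by
      apply linearIndependent_of_ne_zero_of_inner_eq_zero (fun i => i.2)
      intro i j hij
      exact horth i j (fun h => hij (Subtype.ext h))
    have hli : LinearIndependent ℂ w :=
      LinearIndependent.of_comp W.subtype hliE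
    have himg : W.subtype '' Set.range w = v '' S := by
      ext x
      constructor
      · rintro ⟨y, ⟨i, rfl⟩, rfl⟩; exact ⟨i, i.2, rfl⟩
      · rintro ⟨i, hi, rfl⟩; exact ⟨w ⟨i, hi⟩, ⟨⟨i, hi⟩, rfl⟩, rfl⟩
    have hsp : ⊤ ≤ Submodule.span ℂ (Set.range w) := by
      have hinj : Function.Injective W.subtype := Subtype.coe_injective
      have hmap : Submodule.map W.subtype (Submodule.span ℂ (Set.range w))
          = Submodule.map W.subtype ⊤ := by
        rw [Submodule.map_span, himg, hspan, Submodule.map_top,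
          Submodule.range_subtype]
      exact (Submodule.map_injective_of_injective hinj hmap).ge
    haveI : Fintype S := Fintype.ofFinite _
    let B := Module.Basis.mk hli hsp
    have : Module.finrank ℂ W = Nat.card S := by
      rw [Module.finrank_eq_card_basis B, Nat.card_eq_fintype_card]
    rw [← hWk, this]
    rfl
  refine ⟨hcard, horth, hspan, ?_⟩
  intro i
  rw [hinner i i, inner_self_eq_norm_sq_to_K]
  push_cast
  simp [hv]
end

section
/- Let W be a k-dimensional subspace of an N-dimensional Hilbert space H with k > N/2. If there exists an idempotent P with range W such that P*P is diagonal with respect to the standard orthonormal basis {e_i}, then at least 2k − N of the basis vectors e_i belong to W. -/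
set_option maxHeartbeats 1000000 in
theorem stmt_8 (N k : ℕ) (W : Submodule ℂ (EuclideanSpace ℂ (Fin N)))
    (hWk : Module.finrank ℂ W = k) (hk : N < 2 * k)
    (P : EuclideanSpace ℂ (Fin N) →ₗ[ℂ] EuclideanSpace ℂ (Fin N))
    (hP : P ∘ₗ P = P) (hrange : LinearMap.range P = W)
    (hdiag : ∀ i j : Fin N, i ≠ j →
      (inner ℂ ((LinearMap.adjoint P ∘ₗ P) (EuclideanSpace.single i (1 : ℂ)))
        (EuclideanSpace.single j (1 : ℂ)) : ℂ) = 0) :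
    2 * k - N ≤ Nat.card {i : Fin N // EuclideanSpace.single i (1 : ℂ) ∈ W} := by
  classical
  set e : Fin N → EuclideanSpace ℂ (Fin N) := fun i => EuclideanSpace.single i (1 : ℂ) with he
  have hPP : ∀ x, P (P x) = P x := fun x => by
    rw [← LinearMap.comp_apply, hP]
  -- off-diagonal entries of A := P† P vanish
  have hAdiag : ∀ i j, i ≠ j → (LinearMap.adjoint P) (P (e i)) j = 0 := by
    intro i j hij
    have := hdiag i j hij
    rw [LinearMap.comp_apply, EuclideanSpace.inner_single_right] at this
    simpa using this
  have hAi : ∀ i, (LinearMap.adjoint P) (P (e i)) i = ((‖P (e i)‖ : ℂ)) ^ 2 := by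
    intro i
    have h1 : (inner ℂ (e i) ((LinearMap.adjoint P) (P (e i))) : ℂ)
        = (LinearMap.adjoint P) (P (e i)) i := by
      rw [he]; rw [EuclideanSpace.inner_single_left]; simp
    rw [← h1, LinearMap.adjoint_inner_right, inner_self_eq_norm_sq_to_K]
    simp [RCLike.ofReal_pow]
  -- key identity
  have hkey : ∀ i j, (inner ℂ (P (e i)) (P (e j)) : ℂ)
      = ((‖P (e i)‖ : ℂ)) ^ 2 * (P (e j)) i := by
    intro i j
    have h1 : (inner ℂ (P (e i)) (P (e j)) : ℂ) = inner ℂ (P (e i)) (P (P (e j))) := by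
      rw [hPP]
    have h2 : (inner ℂ (P (e i)) (P (P (e j))) : ℂ)
        = inner ℂ ((LinearMap.adjoint P) (P (e i))) (P (e j)) :=
      (LinearMap.adjoint_inner_left P (P (e j)) (P (e i))).symm
    rw [h1, h2]
    rw [PiLp.inner_apply]
    rw [Finset.sum_eq_single i]
    · rw [hAi]; simp [RCLike.inner_apply, mul_comm]
    · intro m _ hmi
      rw [hAdiag i m hmi.symm]
      simp [RCLike.inner_apply]
    · simp
  -- component lemma
  have hip : ∀ i j, (inner ℂ ((LinearMap.adjoint P ∘ₗ P) (e i)) (e j) : ℂ)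
      = inner ℂ (P (e i)) (P (e j)) := by
    intro i j
    rw [LinearMap.comp_apply]
    exact LinearMap.adjoint_inner_left P (e j) (P (e i))
  have hcomp : ∀ i j, P (e i) ≠ 0 → (P (e j)) i = if i = j then (1 : ℂ) else 0 := by
    intro i j hi
    have hn : ((‖P (e i)‖ : ℂ)) ^ 2 ≠ 0 := by
      simp [pow_eq_zero_iff, hi]
    by_cases h : i = j
    · subst h
      have h2 := hkey i i
      rw [inner_self_eq_norm_sq_to_K] at h2
      have h3 : ((‖P (e i)‖ : ℂ)) ^ 2 * 1 = ((‖P (e i)‖ : ℂ)) ^ 2 * (P (e i)) i := by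
        rw [mul_one]
        rw [← h2]
        simp [RCLike.ofReal_pow]
      simp [mul_left_cancel₀ hn h3 |>.symm]
    · have h0 : (inner ℂ (P (e i)) (P (e j)) : ℂ) = 0 := by
        rw [← hip]; exact hdiag i j h
      rw [hkey] at h0
      simp [h]
      exact (mul_eq_zero.mp h0).resolve_left hn
  -- the difference vectors
  set v : Fin N → EuclideanSpace ℂ (Fin N) := fun j => P (e j) - e j with hv
  have hvcomp : ∀ j i, P (e i) ≠ 0 → (v j) i = 0 := by
    intro j i hi
    have : (v j) i = (P (e j)) i - (e j) i := rfl
    rw [this, hcomp i j hi, he]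
    simp [EuclideanSpace.single_apply]
  have hvv : ∀ j j', P (e j) ≠ 0 → P (e j') ≠ 0 → j ≠ j' →
      (inner ℂ (v j) (v j') : ℂ) = 0 := by
    intro j j' hj hj' hjj
    have t1 : (inner ℂ (P (e j)) (P (e j')) : ℂ) = 0 := by
      rw [hkey, hcomp j j' hj]
      simp [hjj]
    have t2 : (inner ℂ (P (e j)) (e j') : ℂ) = 0 := by
      rw [he]
      rw [EuclideanSpace.inner_single_right]
      rw [hcomp j' j hj']
      simp [Ne.symm hjj]
    have t3 : (inner ℂ (e j) (P (e j')) : ℂ) = 0 := by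
      rw [he]
      rw [EuclideanSpace.inner_single_left]
      rw [hcomp j j' hj]
      simp [hjj]
    have t4 : (inner ℂ (e j) (e j') : ℂ) = 0 := by
      simp only [he]
      rw [EuclideanSpace.inner_single_left, EuclideanSpace.single_apply]
      simp [hjj]
    simp only [hv, inner_sub_left, inner_sub_right, t1, t2, t3, t4]
    ring
  have hve : ∀ j i, P (e i) ≠ 0 → (inner ℂ (v j) (e i) : ℂ) = 0 := by
    intro j i hi
    rw [he, EuclideanSpace.inner_single_right, hvcomp j i hi]
    simp
  have hev : ∀ j i, P (e i) ≠ 0 → (inner ℂ (e i) (v j) : ℂ) = 0 := by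
    intro j i hi
    rw [← inner_conj_symm, hve j i hi, map_zero]
  -- membership in W
  have hmemW : ∀ x, x ∈ W ↔ P x = x := by
    intro x
    constructor
    · intro hx
      rw [← hrange] at hx
      obtain ⟨y, rfl⟩ := hx
      exact hPP y
    · intro hx
      rw [← hrange]
      exact ⟨x, hx⟩
  have he0 : ∀ j, e j ≠ 0 := by
    intro j h
    have := congrArg norm h
    rw [he] at this
    simp at this
  set S : Finset (Fin N) := Finset.univ.filter (fun j => P (e j) ≠ 0) with hS
  set G : Finset (Fin N) := Finset.univ.filter (fun j => e j ∈ W) with hG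
  have hGS : G ⊆ S := by
    intro j hjG
    rw [hG, Finset.mem_filter] at hjG
    rw [hS, Finset.mem_filter]
    refine ⟨Finset.mem_univ _, ?_⟩
    rw [(hmemW (e j)).mp hjG.2]
    exact he0 j
  -- k ≤ S.card
  have hWle : W ≤ Submodule.span ℂ ((S.image fun j => P (e j) : Finset _) : Set _) := by
    rw [← hrange]
    rintro x ⟨y, rfl⟩
    have hy : P y = ∑ i, y i • P (e i) := by
      conv_lhs => rw [← (EuclideanSpace.basisFun (Fin N) ℂ).sum_repr y]
      rw [map_sum]
      simp [EuclideanSpace.basisFun_apply, EuclideanSpace.basisFun_repr, he]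
    rw [hy]
    refine Submodule.sum_mem _ fun i _ => ?_
    by_cases h : P (e i) = 0
    · simp [h]
    · refine Submodule.smul_mem _ _ (Submodule.subset_span ?_)
      exact Finset.mem_coe.mpr (Finset.mem_image_of_mem _ (by simp [hS, h]))
  have hSk : k ≤ S.card := by
    calc k = Module.finrank ℂ W := hWk.symm
      _ ≤ Module.finrank ℂ (Submodule.span ℂ
            ((S.image fun j => P (e j) : Finset _) : Set _)) := Submodule.finrank_mono hWle
      _ ≤ (S.image fun j => P (e j)).card := finrank_span_finset_le_card _
      _ ≤ S.card := Finset.card_image_le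
  -- orthonormal family
  let u : Fin N → EuclideanSpace ℂ (Fin N) := fun j => ((‖v j‖ : ℂ))⁻¹ • v j
  have hvne : ∀ j ∈ S \ G, v j ≠ 0 := by
    intro j hj
    rw [Finset.mem_sdiff, hG, Finset.mem_filter] at hj
    have : ¬ (e j ∈ W) := fun h => hj.2 (Finset.mem_filter.mpr ⟨Finset.mem_univ _, h⟩)
    rw [hmemW] at this
    exact sub_ne_zero_of_ne this
  have hSmem : ∀ j ∈ S, P (e j) ≠ 0 := by
    intro j hj
    rw [hS, Finset.mem_filter] at hj
    exact hj.2
  let f : ↥(S \ G) ⊕ ↥S → EuclideanSpace ℂ (Fin N) :=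
    Sum.elim (fun j => u j.1) (fun i => e i.1)
  have horm : Orthonormal ℂ f := by
    rw [orthonormal_iff_ite]
    rintro (⟨j, hj⟩ | ⟨i, hi⟩) (⟨j', hj'⟩ | ⟨i', hi'⟩)
    · by_cases h : j = j'
      · subst h
        simp only [f, Sum.elim_inl, u]
        have hvj : v j ≠ 0 := hvne j hj
        have hnv : ‖v j‖ ≠ 0 := norm_ne_zero_iff.mpr hvj
        have hcne : ((‖v j‖ : ℂ)) ≠ 0 := by exact_mod_cast hnv
        rw [inner_smul_left, inner_smul_right, inner_self_eq_norm_sq_to_K]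
        simp only [map_inv₀, Complex.conj_ofReal, if_pos rfl]
        field_simp
        simp [sq]
      · simp only [f, Sum.elim_inl, u]
        rw [inner_smul_left, inner_smul_right,
          hvv j j' (hSmem j (Finset.mem_sdiff.mp hj).1) (hSmem j' (Finset.mem_sdiff.mp hj').1) h]
        simp [Subtype.mk.injEq, h]
    · simp only [f, Sum.elim_inl, Sum.elim_inr, u]
      rw [inner_smul_left, hve j i' (hSmem i' hi')]
      simp
    · simp only [f, Sum.elim_inl, Sum.elim_inr, u]
      rw [inner_smul_right, hev j' i (hSmem i hi)]
      simp
    · simp only [f, Sum.elim_inr, he]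
      rw [EuclideanSpace.inner_single_left]
      simp [EuclideanSpace.single_apply, Subtype.mk.injEq, eq_comm]
  have hcard := horm.linearIndependent.fintype_card_le_finrank
  rw [finrank_euclideanSpace_fin] at hcard
  rw [Fintype.card_sum, Fintype.card_coe, Fintype.card_coe] at hcard
  have hsd : (S \ G).card = S.card - G.card := Finset.card_sdiff_of_subset hGS
  have hGle : G.card ≤ S.card := Finset.card_le_card hGS
  have hNc : Nat.card {i : Fin N // EuclideanSpace.single i (1 : ℂ) ∈ W} = G.card := by
    rw [Nat.card_eq_fintype_card, hG]
    rw [he] at *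
    convert Fintype.card_subtype _
  rw [hNc]
  omega
end

section
/- Fix k ≤ N/2 and K ⊆ {1,...,N} with |K| = k, and let {a_n}_{n∈K} be real numbers with a_n ≥ 1. Then there exists a k-dimensional subspace W of H and an idempotent P with range W such that P*P is diagonal with respect to the standard basis, with diagonal entries a_n for n ∈ K and 0 for n ∉ K. -/
theorem stmt_13 (N k : ℕ) (hk : 2 * k ≤ N) (K : Finset (Fin N)) (hK : K.card = k)
    (a : Fin N → ℝ) (ha : ∀ n ∈ K, 1 ≤ a n) :
    ∃ W : Submodule ℝ (EuclideanSpace ℝ (Fin N)),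
      Module.finrank ℝ W = k ∧
      ∃ P : EuclideanSpace ℝ (Fin N) →ₗ[ℝ] EuclideanSpace ℝ (Fin N),
        P ∘ₗ P = P ∧ LinearMap.range P = W ∧
        (∀ m n : Fin N, m ≠ n →
          (inner ℝ ((LinearMap.adjoint P ∘ₗ P) (EuclideanSpace.single m (1 : ℝ)))
            (EuclideanSpace.single n (1 : ℝ)) : ℝ) = 0) ∧
        (∀ n ∈ K,
          (inner ℝ ((LinearMap.adjoint P ∘ₗ P) (EuclideanSpace.single n (1 : ℝ)))
            (EuclideanSpace.single n (1 : ℝ)) : ℝ) = a n) ∧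
        (∀ n ∉ K,
          (inner ℝ ((LinearMap.adjoint P ∘ₗ P) (EuclideanSpace.single n (1 : ℝ)))
            (EuclideanSpace.single n (1 : ℝ)) : ℝ) = 0) := by
  -- choose an injection from K into its complement
  obtain ⟨σ⟩ : Nonempty (K ↪ (Kᶜ : Finset (Fin N))) := by
    apply Function.Embedding.nonempty_of_card_le
    simp only [Fintype.card_coe, Finset.card_compl, Fintype.card_fin, hK]
    omega
  set τ : Fin N → Fin N := fun n => if h : n ∈ K then (σ ⟨n, h⟩ : Fin N) else n with hτdef
  have hτ1 : ∀ n ∈ K, τ n ∉ K := by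
    intro n hn
    simp only [hτdef, dif_pos hn]
    exact Finset.mem_compl.mp (σ ⟨n, hn⟩).2
  have hτ2 : ∀ m ∈ K, ∀ n ∈ K, τ m = τ n → m = n := by
    intro m hm n hn h
    simp only [hτdef, dif_pos hm, dif_pos hn] at h
    have := σ.injective (Subtype.coe_injective h)
    exact congrArg Subtype.val this
  set c : Fin N → ℝ := fun n => Real.sqrt (a n - 1) with hcdef
  set w : Fin N → EuclideanSpace ℝ (Fin N) :=
    fun n => EuclideanSpace.single n 1 + c n • EuclideanSpace.single (τ n) 1 with hwdef
  -- coordinates of w within K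
  have hw_coord : ∀ n ∈ K, ∀ m ∈ K, w n m = if m = n then 1 else 0 := by
    intro n hn m hm
    have hmτ : m ≠ τ n := fun h => hτ1 n hn (h ▸ hm)
    simp [hwdef, EuclideanSpace.single_apply, hmτ]
  -- inner products of the w's
  have hw_inner : ∀ m ∈ K, ∀ n ∈ K, (inner ℝ (w m) (w n) : ℝ) = if m = n then a m else 0 := by
    intro m hm n hn
    have h1 : m ≠ τ n := fun h => hτ1 n hn (h ▸ hm)
    have h2 : τ m ≠ n := fun h => hτ1 m hm (h ▸ hn)
    by_cases hmn : m = n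
    · subst hmn
      simp [-inner_self_eq_norm_sq_to_K, hwdef, inner_add_add_self, real_inner_smul_left, real_inner_smul_right,
        EuclideanSpace.inner_single_left, EuclideanSpace.single_apply, h1, h1.symm]
      have : c m * c m = a m - 1 := Real.mul_self_sqrt (by linarith [ha m hm])
      linarith
    · have h3 : τ m ≠ τ n := fun h => hmn (hτ2 m hm n hn h)
      simp [hwdef, inner_add_add_self, real_inner_smul_left, real_inner_smul_right,
        EuclideanSpace.inner_single_left, EuclideanSpace.single_apply, h1, h2, h3, hmn,
        real_inner_comm (EuclideanSpace.single m (1:ℝ))]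
      have h2' : n ≠ τ m := fun h => h2 h.symm
      have h1' : τ n ≠ m := fun h => h1 h.symm
      have h3' : τ n ≠ τ m := fun h => h3 h.symm
      apply Finset.sum_eq_zero
      intro x _
      rcases eq_or_ne x n with rfl | hxn
      · simp [Ne.symm hmn, h2']
      rcases eq_or_ne x (τ n) with rfl | hxτn
      · simp [h1', h3']
      · simp [hxn, hxτn]
  set P : EuclideanSpace ℝ (Fin N) →ₗ[ℝ] EuclideanSpace ℝ (Fin N) :=
    { toFun := fun x => ∑ n ∈ K, x n • w n
      map_add' := by intro x y; simp [PiLp.add_apply, add_smul, Finset.sum_add_distrib]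
      map_smul' := by intro r x; simp [PiLp.smul_apply, smul_smul, Finset.smul_sum] }
    with hPdef
  have hPapply : ∀ x : EuclideanSpace ℝ (Fin N), P x = ∑ n ∈ K, x n • w n := fun _ => rfl
  have hPapp : ∀ (x : EuclideanSpace ℝ (Fin N)) (m : Fin N), P x m = ∑ n ∈ K, x n * w n m := by
    intro x m
    rw [hPapply]
    rw [WithLp.ofLp_sum]
    exact Finset.sum_apply m K _
  have P_single : ∀ m : Fin N, P (EuclideanSpace.single m 1) = if m ∈ K then w m else 0 := by
    intro m
    rw [hPapply]
    simp [EuclideanSpace.single_apply, ite_smul, Finset.sum_ite_eq]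
  have hPfix : ∀ (x : EuclideanSpace ℝ (Fin N)), ∀ m ∈ K, P x m = x m := by
    intro x m hm
    rw [hPapp]
    rw [Finset.sum_congr rfl (fun n hn => by rw [hw_coord n hn m hm])]
    simp [mul_ite, Finset.sum_ite_eq, hm]
  have hPP : P ∘ₗ P = P := by
    apply LinearMap.ext; intro x
    rw [LinearMap.comp_apply, hPapply (P x)]
    rw [Finset.sum_congr rfl fun m hm => by rw [hPfix x m hm]]
    exact (hPapply x).symm
  set W : Submodule ℝ (EuclideanSpace ℝ (Fin N)) := Submodule.span ℝ (w '' ↑K) with hWdef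
  have hrange : LinearMap.range P = W := by
    apply le_antisymm
    · rintro _ ⟨x, rfl⟩
      rw [hPapply]
      exact Submodule.sum_mem _ fun n hn =>
        Submodule.smul_mem _ _ (Submodule.subset_span ⟨n, hn, rfl⟩)
    · rw [hWdef, Submodule.span_le]
      rintro _ ⟨n, hn, rfl⟩
      have hn' : n ∈ K := hn
      exact ⟨EuclideanSpace.single n 1, by rw [P_single, if_pos hn']⟩
  have hli : LinearIndependent ℝ (fun n : K => w n) := by
    rw [Fintype.linearIndependent_iff]
    intro g hg i
    have hcoord : (∑ j : K, g j • w (j : Fin N)) (i : Fin N) = g i := by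
      rw [WithLp.ofLp_sum]
      rw [Finset.sum_apply (i : Fin N) Finset.univ (fun j : K => g j • w (j : Fin N))]
      have : ∀ j : K, (g j • w (j : Fin N)) (i : Fin N) =
          g j * (if (i : Fin N) = (j : Fin N) then 1 else 0) := by
        intro j
        rw [PiLp.smul_apply, hw_coord _ j.2 _ i.2]
        rfl
      rw [Finset.sum_congr rfl fun j _ => this j]
      simp [mul_ite, Subtype.ext_iff.symm]
    rw [hg] at hcoord
    simpa using hcoord.symm
  have hfin : Module.finrank ℝ W = k := by
    have himg : w '' ↑K = Set.range (fun n : K => w (n : Fin N)) := by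
      ext y
      constructor
      · rintro ⟨x, hx, rfl⟩; exact ⟨⟨x, hx⟩, rfl⟩
      · rintro ⟨⟨x, hx⟩, rfl⟩; exact ⟨x, hx, rfl⟩
    rw [hWdef, himg, finrank_span_eq_card hli, Fintype.card_coe, hK]
  refine ⟨W, hfin, P, hPP, hrange, ?_, ?_, ?_⟩
  · intro m n hmn
    rw [LinearMap.comp_apply, LinearMap.adjoint_inner_left, P_single, P_single]
    by_cases hm : m ∈ K
    · by_cases hn : n ∈ K
      · simp only [if_pos hm, if_pos hn, hw_inner m hm n hn, if_neg hmn]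
      · simp [hn]
    · simp [hm]
  · intro n hn
    rw [LinearMap.comp_apply, LinearMap.adjoint_inner_left, P_single,
      if_pos hn, hw_inner n hn n hn, if_pos rfl]
  · intro n hn
    rw [LinearMap.comp_apply, LinearMap.adjoint_inner_left, P_single]
    simp [hn]
end

section
/- Let W be a k-dimensional subspace of an N-dimensional Hilbert space with k ≥ N/2. Then there exist two idempotents P₁, P₂, both with range W, such that P₁*P₁ + P₂*P₂ = 2·Id. -/
theorem stmt_15 {H : Type*} [NormedAddCommGroup H] [InnerProductSpace ℂ H]
    [FiniteDimensional ℂ H] (N k : ℕ) (hN : Module.finrank ℂ H = N)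
    (W : Submodule ℂ H) (hW : Module.finrank ℂ W = k) (hk : N ≤ 2 * k) :
    ∃ P₁ P₂ : H →ₗ[ℂ] H,
      P₁ ∘ₗ P₁ = P₁ ∧ P₂ ∘ₗ P₂ = P₂ ∧
      LinearMap.range P₁ = W ∧ LinearMap.range P₂ = W ∧
      LinearMap.adjoint P₁ ∘ₗ P₁ + LinearMap.adjoint P₂ ∘ₗ P₂
        = (2 : ℂ) • LinearMap.id := by
  classical
  -- dimension facts
  have hadd : Module.finrank ℂ W + Module.finrank ℂ Wᗮ = Module.finrank ℂ H :=
    Submodule.finrank_add_finrank_orthogonal W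
  have hle : Module.finrank ℂ Wᗮ ≤ Module.finrank ℂ W := by omega
  -- orthonormal bases
  let e := stdOrthonormalBasis ℂ (↥Wᗮ)
  let f := stdOrthonormalBasis ℂ (↥W)
  -- the isometry A : Wᗮ →ₗ W
  set A : (↥Wᗮ) →ₗ[ℂ] (↥W) :=
    Module.Basis.constr e.toBasis ℂ (fun i => f (Fin.castLE hle i)) with hA
  have hAe : ∀ i, A (e.toBasis i) = f (Fin.castLE hle i) := fun i =>
    Module.Basis.constr_basis e.toBasis ℂ _ i
  have hv : Orthonormal ℂ (⇑e.toBasis) := by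
    rw [e.coe_toBasis]; exact e.orthonormal
  have hforth : Orthonormal ℂ (⇑A ∘ ⇑e.toBasis) := by
    have h : (⇑A ∘ ⇑e.toBasis) = fun i => f (Fin.castLE hle i) := funext hAe
    rw [h]
    exact f.orthonormal.comp _ (Fin.castLE_injective hle)
  -- A preserves inner products
  have hAinner : ∀ x y : (↥Wᗮ), (inner ℂ (A x) (A y) : ℂ) = inner ℂ x y := by
    intro x y
    have h2 := (A.isometryOfOrthonormal hv hforth).inner_map_map x y
    rwa [LinearMap.coe_isometryOfOrthonormal] at h2
  have hAA : ∀ v : (↥Wᗮ), LinearMap.adjoint A (A v) = v := by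
    intro v
    refine ext_inner_right ℂ fun y => ?_
    rw [LinearMap.adjoint_inner_left]
    exact hAinner v y
  -- projections and inclusions
  set pW : H →ₗ[ℂ] W := (Submodule.orthogonalProjectionOnto W).toLinearMap with hpW
  set pP : H →ₗ[ℂ] (↥Wᗮ) := (Submodule.orthogonalProjectionOnto Wᗮ).toLinearMap with hpP
  set iW : W →ₗ[ℂ] H := W.subtype with hiW
  set iP : (↥Wᗮ) →ₗ[ℂ] H := Wᗮ.subtype with hiP
  have haW : pW = LinearMap.adjoint iW := by
    rw [LinearMap.eq_adjoint_iff]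
    intro x y
    simp [hpW, hiW, Submodule.coe_inner]
  have haP : pP = LinearMap.adjoint iP := by
    rw [LinearMap.eq_adjoint_iff]
    intro x y
    simp [hpP, hiP, Submodule.coe_inner]
  have haW' : LinearMap.adjoint pW = iW := by rw [haW, LinearMap.adjoint_adjoint]
  have haP' : LinearMap.adjoint pP = iP := by rw [haP, LinearMap.adjoint_adjoint]
  -- pointwise projection identities
  have hWW : ∀ w : W, pW (iW w) = w := fun w =>
    Submodule.orthogonalProjectionOnto_mem_subspace_eq_self w
  have hPW : ∀ w : W, pP (iW w) = 0 := fun w =>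
    Submodule.orthogonalProjectionOnto_apply_of_mem_orthogonal
      (W.le_orthogonal_orthogonal w.2)
  have hWP : ∀ v : (↥Wᗮ), pW (iP v) = 0 := fun v =>
    Submodule.orthogonalProjectionOnto_apply_of_mem_orthogonal v.2
  have h4 : ∀ x : H, iW (pW x) + iP (pP x) = x := fun x =>
    Submodule.starProjection_add_starProjection_orthogonal (K := W) x
  -- the two idempotents
  set Q : H →ₗ[ℂ] H := iW ∘ₗ pW with hQ
  set S : H →ₗ[ℂ] H := iW ∘ₗ (A ∘ₗ pP) with hS
  have hQap : ∀ x, Q x = iW (pW x) := fun _ => rfl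
  have hSap : ∀ x, S x = iW (A (pP x)) := fun _ => rfl
  refine ⟨Q + S, Q - S, ?_, ?_, ?_, ?_, ?_⟩
  · ext x
    simp only [LinearMap.coe_comp, Function.comp_apply, LinearMap.add_apply,
      hQap, hSap, map_add, hWW, hPW, hWP, map_zero, add_zero, zero_add]
  · ext x
    simp only [LinearMap.coe_comp, Function.comp_apply, LinearMap.sub_apply,
      hQap, hSap, map_sub, hWW, hPW, hWP, map_zero, sub_zero, zero_sub, map_neg]
  · apply le_antisymm
    · rintro x ⟨y, rfl⟩
      simp only [LinearMap.add_apply, hQap, hSap]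
      exact W.add_mem (SetLike.coe_mem _) (SetLike.coe_mem _)
    · intro w hw
      refine ⟨w, ?_⟩
      have h5 : iW (pW w) = w := Submodule.starProjection_eq_self_iff.2 hw
      have h6 : pP w = 0 :=
        Submodule.orthogonalProjectionOnto_apply_of_mem_orthogonal
          (W.le_orthogonal_orthogonal hw)
      simp only [LinearMap.add_apply, hQap, hSap, h5, h6, map_zero, add_zero]
  · apply le_antisymm
    · rintro x ⟨y, rfl⟩
      simp only [LinearMap.sub_apply, hQap, hSap]
      exact W.sub_mem (SetLike.coe_mem _) (SetLike.coe_mem _)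
    · intro w hw
      refine ⟨w, ?_⟩
      have h5 : iW (pW w) = w := Submodule.starProjection_eq_self_iff.2 hw
      have h6 : pP w = 0 :=
        Submodule.orthogonalProjectionOnto_apply_of_mem_orthogonal
          (W.le_orthogonal_orthogonal hw)
      simp only [LinearMap.sub_apply, hQap, hSap, h5, h6, map_zero, sub_zero]
  · -- adjoint identity
    have haQ : LinearMap.adjoint Q = Q := by
      rw [hQ, LinearMap.adjoint_comp, haW', ← haW]
    have haS : LinearMap.adjoint S = iP ∘ₗ ((LinearMap.adjoint A) ∘ₗ pW) := by
      rw [hS, LinearMap.adjoint_comp, LinearMap.adjoint_comp, haP', ← haW,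
        LinearMap.comp_assoc]
    rw [map_add, map_sub, haQ, haS]
    ext x
    simp only [LinearMap.add_apply, LinearMap.sub_apply, LinearMap.coe_comp,
      Function.comp_apply, LinearMap.smul_apply, LinearMap.id_apply,
      hQap, hSap, map_add, map_sub, hWW, hPW, hWP, map_zero, hAA,
      add_zero, zero_add, sub_zero]
    have h7 := h4 x
    have : (2 : ℂ) • x = (2 : ℂ) • (iW (pW x) + iP (pP x)) := by rw [h7]
    rw [this]
    simp only [smul_add, two_smul]
    abel
end

section
/- Let N = kL and let H be an N-dimensional Hilbert space. Then there exists a k-dimensional subspace W and idempotents {P_j}_{j=1}^{L}, each with range W, such that ∑_{j=1}^{L} P_j* P_j = L·Id. -/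
open scoped BigOperators

namespace Stmt16

noncomputable section

variable {k L : ℕ}

/-- reindexing map: send `n ↔ (a,i)` to the index `(a,j)`. -/
def g (k : ℕ) {L : ℕ} (j : Fin L) (n : Fin (k * L)) : Fin (k * L) :=
  finProdFinEquiv ((finProdFinEquiv.symm n).1, j)

lemma g_fst (j : Fin L) (n : Fin (k * L)) :
    (finProdFinEquiv.symm (g k j n)).1 = (finProdFinEquiv.symm n).1 := by
  simp [g]

lemma g_g (j j' : Fin L) (n : Fin (k * L)) : g k j (g k j' n) = g k j n := by
  simp [g]

lemma g_apply_fp (j : Fin L) (a : Fin k) (i : Fin L) :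
    g k j (finProdFinEquiv (a, i)) = finProdFinEquiv (a, j) := by
  simp [g]

/-- The idempotent `P j`. -/
def P (k : ℕ) {L : ℕ} (j : Fin L) :
    EuclideanSpace ℝ (Fin (k * L)) →ₗ[ℝ] EuclideanSpace ℝ (Fin (k * L)) where
  toFun x := WithLp.toLp 2 (fun n => x (g k j n))
  map_add' _ _ := rfl
  map_smul' _ _ := rfl

lemma P_apply (j : Fin L) (x : EuclideanSpace ℝ (Fin (k * L))) (n : Fin (k * L)) :
    P k j x n = x (g k j n) := rfl

/-- The subspace: vectors depending only on the first coordinate. -/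
def Wsub (k L : ℕ) : Submodule ℝ (EuclideanSpace ℝ (Fin (k * L))) where
  carrier := {x | ∀ n m : Fin (k * L),
    (finProdFinEquiv.symm n).1 = (finProdFinEquiv.symm m).1 → x n = x m}
  add_mem' hx hy n m h := by
    have := hx n m h; have := hy n m h
    simp_all [PiLp.add_apply]
  zero_mem' := by intro n m h; rfl
  smul_mem' c x hx n m h := by
    have := hx n m h
    simp_all [PiLp.smul_apply]

lemma range_P (j : Fin L) : LinearMap.range (P k j) = Wsub k L := by
  ext x
  constructor
  · rintro ⟨y, rfl⟩ n m h
    have : g k j n = g k j m := by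
      unfold g; rw [h]
    exact congrArg y this
  · intro hx
    refine ⟨x, ?_⟩
    ext n
    exact hx _ _ (g_fst j n)

lemma finrank_W (hL : 0 < L) : Module.finrank ℝ (Wsub k L) = k := by
  let j0 : Fin L := ⟨0, hL⟩
  let e : Wsub k L ≃ₗ[ℝ] (Fin k → ℝ) :=
    { toFun := fun x a => x.1 (finProdFinEquiv (a, j0))
      map_add' := fun x y => rfl
      map_smul' := fun c x => rfl
      invFun := fun f => ⟨WithLp.toLp 2 (fun n => f (finProdFinEquiv.symm n).1), by
        intro n m h
        simp only [PiLp.toLp_apply, h]⟩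
      left_inv := by
        rintro ⟨x, hx⟩
        ext n
        exact hx _ _ (by simp)
      right_inv := by
        intro f
        funext a
        simp }
  rw [e.finrank_eq]
  simp

lemma sum_adjoint (k L : ℕ) :
    ∑ j : Fin L, LinearMap.adjoint (P k j) ∘ₗ P k j
      = (L : ℝ) • (LinearMap.id :
          EuclideanSpace ℝ (Fin (k * L)) →ₗ[ℝ] EuclideanSpace ℝ (Fin (k * L))) := by
  apply LinearMap.ext
  intro x
  apply ext_inner_left ℝ
  intro v
  rw [LinearMap.sum_apply, inner_sum]
  have h1 : ∀ j : Fin L,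
      (inner ℝ v ((LinearMap.adjoint (P k j) ∘ₗ P k j) x) : ℝ)
        = inner ℝ (P k j v) (P k j x) := by
    intro j
    rw [LinearMap.comp_apply, LinearMap.adjoint_inner_right]
  simp_rw [h1]
  have hin : ∀ u w : EuclideanSpace ℝ (Fin (k * L)),
      (inner ℝ u w : ℝ) = ∑ n, u n * w n := by
    intro u w
    simp [PiLp.inner_apply, RCLike.inner_apply, mul_comm]
  have h2 : ∀ j : Fin L,
      (inner ℝ (P k j v) (P k j x) : ℝ)
        = (L : ℝ) * ∑ a : Fin k, v (finProdFinEquiv (a, j)) * x (finProdFinEquiv (a, j)) := by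
    intro j
    rw [hin]
    rw [← Equiv.sum_comp (finProdFinEquiv : Fin k × Fin L ≃ Fin (k * L))
      (fun n => P k j v n * P k j x n)]
    simp_rw [P_apply]
    rw [Fintype.sum_prod_type]
    rw [Finset.mul_sum]
    refine Finset.sum_congr rfl fun a _ => ?_
    rw [show (∑ y : Fin L, v (g k j (finProdFinEquiv (a, y))) * x (g k j (finProdFinEquiv (a, y))))
        = ∑ _y : Fin L, v (finProdFinEquiv (a, j)) * x (finProdFinEquiv (a, j)) from
      Finset.sum_congr rfl fun i _ => by rw [g_apply_fp j a i]]
    simp [Finset.sum_const, mul_comm]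
  simp_rw [h2]
  rw [← Finset.mul_sum]
  have h3 : ∑ j : Fin L, ∑ a : Fin k,
      v (finProdFinEquiv (a, j)) * x (finProdFinEquiv (a, j)) = inner ℝ v x := by
    rw [hin, ← Equiv.sum_comp (finProdFinEquiv : Fin k × Fin L ≃ Fin (k * L))
      (fun n => v n * x n), Fintype.sum_prod_type, Finset.sum_comm]
  rw [h3]
  simp [inner_smul_right]

end

end Stmt16

theorem stmt_16 (k L : ℕ) (hk : 0 < k) (hL : 0 < L) :
    ∃ W : Submodule ℝ (EuclideanSpace ℝ (Fin (k * L))),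
      Module.finrank ℝ W = k ∧
      ∃ P : Fin L → (EuclideanSpace ℝ (Fin (k * L)) →ₗ[ℝ] EuclideanSpace ℝ (Fin (k * L))),
        (∀ j, P j ∘ₗ P j = P j) ∧
        (∀ j, LinearMap.range (P j) = W) ∧
        ∑ j, LinearMap.adjoint (P j) ∘ₗ P j = (L : ℝ) • LinearMap.id := by
  refine ⟨Stmt16.Wsub k L, Stmt16.finrank_W hL, Stmt16.P k, ?_, Stmt16.range_P, Stmt16.sum_adjoint k L⟩
  intro j
  apply LinearMap.ext
  intro x
  ext n
  show x (Stmt16.g k j (Stmt16.g k j n)) = x (Stmt16.g k j n)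
  rw [Stmt16.g_g]
end

section
/- In ℝ³, let W = span{(1,0,0), (0,1/√2,1/√2)}. Then there are two idempotents P and Q, both with range W (P projecting along e₃, Q projecting along e₂), such that P*P + Q*Q = 2·Id. -/
open Matrix

lemma toEL_comp (M N : Matrix (Fin 3) (Fin 3) ℝ) :
    Matrix.toEuclideanLin M ∘ₗ Matrix.toEuclideanLin N = Matrix.toEuclideanLin (M * N) := by
  apply LinearMap.ext
  intro x
  simp [Matrix.toEuclideanLin_apply, Matrix.mulVec_mulVec]

lemma toEL_one : Matrix.toEuclideanLin (1 : Matrix (Fin 3) (Fin 3) ℝ) = LinearMap.id := by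
  apply LinearMap.ext
  intro x
  simp [Matrix.toEuclideanLin_apply]

theorem stmt_17
    (W : Submodule ℝ (EuclideanSpace ℝ (Fin 3)))
    (hW : W = Submodule.span ℝ
      {(WithLp.equiv 2 (Fin 3 → ℝ)).symm ![1, 0, 0],
       (WithLp.equiv 2 (Fin 3 → ℝ)).symm ![0, 1 / Real.sqrt 2, 1 / Real.sqrt 2]}) :
    ∃ P Q : EuclideanSpace ℝ (Fin 3) →ₗ[ℝ] EuclideanSpace ℝ (Fin 3),
      P ∘ₗ P = P ∧ Q ∘ₗ Q = Q ∧
      LinearMap.range P = W ∧ LinearMap.range Q = W ∧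
      LinearMap.ker P = Submodule.span ℝ {EuclideanSpace.single (2 : Fin 3) (1 : ℝ)} ∧
      LinearMap.ker Q = Submodule.span ℝ {EuclideanSpace.single (1 : Fin 3) (1 : ℝ)} ∧
      LinearMap.adjoint P ∘ₗ P + LinearMap.adjoint Q ∘ₗ Q = (2 : ℝ) • LinearMap.id := by
  set A : Matrix (Fin 3) (Fin 3) ℝ := !![1,0,0;0,1,0;0,1,0] with hA
  set B : Matrix (Fin 3) (Fin 3) ℝ := !![1,0,0;0,0,1;0,0,1] with hB
  refine ⟨Matrix.toEuclideanLin A, Matrix.toEuclideanLin B, ?_, ?_, ?_, ?_, ?_, ?_, ?_⟩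
  · rw [toEL_comp]
    congr 1
    ext i j
    fin_cases i <;> fin_cases j <;> norm_num [hA, Matrix.mul_apply, Fin.sum_univ_three, Matrix.vecHead, Matrix.vecTail, Matrix.cons_val_two, Matrix.tail_cons]
  · rw [toEL_comp]
    congr 1
    ext i j
    fin_cases i <;> fin_cases j <;> norm_num [hB, Matrix.mul_apply, Fin.sum_univ_three, Matrix.vecHead, Matrix.vecTail, Matrix.cons_val_two, Matrix.tail_cons]
  · -- range P = W
    rw [hW]
    apply le_antisymm
    · rintro x ⟨y, rfl⟩
      rw [Submodule.mem_span_pair]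
      refine ⟨y 0, Real.sqrt 2 * y 1, ?_⟩
      ext i
      fin_cases i <;>
        simp [hA, Matrix.toEuclideanLin_apply, Matrix.mulVec, dotProduct,
          Fin.sum_univ_three, WithLp.equiv_symm_apply, PiLp.toLp_apply,
          Matrix.vecHead, Matrix.vecTail] <;>
        field_simp
    · rw [Submodule.span_le]
      rintro x (rfl | rfl)
      · refine ⟨(WithLp.equiv 2 (Fin 3 → ℝ)).symm ![1, 0, 0], ?_⟩
        ext i
        fin_cases i <;>
          simp [hA, Matrix.toEuclideanLin_apply, Matrix.mulVec, dotProduct,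
            Fin.sum_univ_three, WithLp.equiv_symm_apply, PiLp.toLp_apply,
            Matrix.vecHead, Matrix.vecTail]
      · refine ⟨(WithLp.equiv 2 (Fin 3 → ℝ)).symm ![0, 1 / Real.sqrt 2, 1 / Real.sqrt 2], ?_⟩
        ext i
        fin_cases i <;>
          simp [hA, Matrix.toEuclideanLin_apply, Matrix.mulVec, dotProduct,
            Fin.sum_univ_three, WithLp.equiv_symm_apply, PiLp.toLp_apply,
            Matrix.vecHead, Matrix.vecTail]
  · -- range Q = W
    rw [hW]
    apply le_antisymm
    · rintro x ⟨y, rfl⟩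
      rw [Submodule.mem_span_pair]
      refine ⟨y 0, Real.sqrt 2 * y 2, ?_⟩
      ext i
      fin_cases i <;>
        simp [hB, Matrix.toEuclideanLin_apply, Matrix.mulVec, dotProduct,
          Fin.sum_univ_three, WithLp.equiv_symm_apply, PiLp.toLp_apply,
          Matrix.vecHead, Matrix.vecTail] <;>
        field_simp
    · rw [Submodule.span_le]
      rintro x (rfl | rfl)
      · refine ⟨(WithLp.equiv 2 (Fin 3 → ℝ)).symm ![1, 0, 0], ?_⟩
        ext i
        fin_cases i <;>
          simp [hB, Matrix.toEuclideanLin_apply, Matrix.mulVec, dotProduct,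
            Fin.sum_univ_three, WithLp.equiv_symm_apply, PiLp.toLp_apply,
            Matrix.vecHead, Matrix.vecTail]
      · refine ⟨(WithLp.equiv 2 (Fin 3 → ℝ)).symm ![0, 1 / Real.sqrt 2, 1 / Real.sqrt 2], ?_⟩
        ext i
        fin_cases i <;>
          simp [hB, Matrix.toEuclideanLin_apply, Matrix.mulVec, dotProduct,
            Fin.sum_univ_three, WithLp.equiv_symm_apply, PiLp.toLp_apply,
            Matrix.vecHead, Matrix.vecTail]
  · -- ker P
    ext x
    rw [LinearMap.mem_ker, Submodule.mem_span_singleton]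
    constructor
    · intro h
      refine ⟨x 2, ?_⟩
      have h0 := congrFun (congrArg (WithLp.equiv 2 (Fin 3 → ℝ)) h) 0
      have h1 := congrFun (congrArg (WithLp.equiv 2 (Fin 3 → ℝ)) h) 1
      simp [hA, Matrix.toEuclideanLin_apply, Matrix.mulVec, dotProduct,
        Fin.sum_univ_three, Matrix.vecHead, Matrix.vecTail] at h0 h1
      ext i
      fin_cases i <;>
        simp [EuclideanSpace.single_apply, h0, h1]
    · rintro ⟨a, rfl⟩
      ext i
      fin_cases i <;>
        simp [hA, Matrix.toEuclideanLin_apply, Matrix.mulVec, dotProduct,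
          Fin.sum_univ_three, Matrix.vecHead, Matrix.vecTail, EuclideanSpace.single_apply]
  · -- ker Q
    ext x
    rw [LinearMap.mem_ker, Submodule.mem_span_singleton]
    constructor
    · intro h
      refine ⟨x 1, ?_⟩
      have h0 := congrFun (congrArg (WithLp.equiv 2 (Fin 3 → ℝ)) h) 0
      have h1 := congrFun (congrArg (WithLp.equiv 2 (Fin 3 → ℝ)) h) 1
      simp [hB, Matrix.toEuclideanLin_apply, Matrix.mulVec, dotProduct,
        Fin.sum_univ_three, Matrix.vecHead, Matrix.vecTail] at h0 h1
      ext i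
      fin_cases i <;>
        simp [EuclideanSpace.single_apply, h0, h1]
    · rintro ⟨a, rfl⟩
      ext i
      fin_cases i <;>
        simp [hB, Matrix.toEuclideanLin_apply, Matrix.mulVec, dotProduct,
          Fin.sum_univ_three, Matrix.vecHead, Matrix.vecTail, EuclideanSpace.single_apply]
  · rw [← Matrix.toEuclideanLin_conjTranspose_eq_adjoint, ← Matrix.toEuclideanLin_conjTranspose_eq_adjoint,
      toEL_comp, toEL_comp, ← map_add, ← toEL_one, ← _root_.map_smul]
    congr 1
    ext i j
    fin_cases i <;> fin_cases j <;>
      norm_num [hA, hB, Matrix.mul_apply, Fin.sum_univ_three, Matrix.conjTranspose_apply,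
        Matrix.one_apply, Matrix.vecHead, Matrix.vecTail, Fin.ext_iff, Matrix.cons_val_two, Matrix.tail_cons]
end
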